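/- Let φ = (1 + √5)/2 be the Golden Ratio. Then (3 − √5)/2 = 1/(1 + φ) = φ⁻², and for any q ∈ (0,1) the following equivalence holds: there exists β ∈ (0, 1/2) with q < β and q < 2 − 1/(1−β) if and only if q < (3 − √5)/2. -/
import Mathlib


theorem golden_ratio_security_threshold
    (φ : ℝ) (hφ : φ = (1 + Real.sqrt 5) / 2) :
    (3 - Real.sqrt 5) / 2 = 1 / (1 + φ)
    ∧ (3 - Real.sqrt 5) / 2 = (φ ^ 2)⁻¹
    ∧ ∀ q ∈ Set.Ioo (0 : ℝ) 1,
        ((∃ β ∈ Set.Ioo (0 : ℝ) (1 / 2), q < β ∧ q < 2 - 1 / (1 - β))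
          ↔ q < (3 - Real.sqrt 5) / 2) := by
  have hs : Real.sqrt 5 ^ 2 = 5 := Real.sq_sqrt (by norm_num)
  have hs2 : 2 < Real.sqrt 5 := by nlinarith [Real.sqrt_nonneg 5]
  have hs3 : Real.sqrt 5 < 3 := by nlinarith [Real.sqrt_nonneg 5]
  set s := Real.sqrt 5 with hsdef
  subst hφ
  refine ⟨by rw [eq_div_iff (by nlinarith)]; nlinarith,
          by rw [inv_eq_one_div, eq_div_iff (by nlinarith)]; nlinarith, ?_⟩
  rintro q ⟨hq0, hq1⟩
  constructor
  · rintro ⟨β, ⟨hβ0, hβh⟩, hqβ, hq2⟩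
    by_contra h
    push_neg at h
    have h1β : (0:ℝ) < 1 - β := by linarith
    have h3 : 1 < (2 - q) * (1 - β) := by
      have h4 : 1 / (1 - β) < 2 - q := by linarith
      calc 1 = (1 / (1 - β)) * (1 - β) := by field_simp
        _ < (2 - q) * (1 - β) := by
            exact mul_lt_mul_of_pos_right h4 h1β
    nlinarith [mul_nonneg (by linarith : (0:ℝ) ≤ 2*q - (3 - s))
      (by nlinarith : (0:ℝ) ≤ (3 + s) - 2*q)]
  · intro h
    refine ⟨(3 - s) / 2, ⟨by linarith, by linarith⟩, h, ?_⟩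
    have hkey : 2 - 1 / (1 - (3 - s) / 2) = (3 - s) / 2 := by
      rw [show 1 - (3 - s) / 2 = (s - 1) / 2 by ring]
      have hne : s - 1 ≠ 0 := by nlinarith
      field_simp [hne]
      nlinarith
    linarith
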